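/- (Proposition 2, mixture form) In the reinforced urn process, the failure states are conditionally i.i.d. with a beta-Stacy random hazard: for every m and all a_1,…,a_m ≥ 0, P(ξ_1 = a_1,…,ξ_m = a_m) = E[∏_{p=1}^m (Y_{a_p} ∏_{j=0}^{a_p - 1}(1 - Y_j))], where (Y_j)_{j≥0} are independent random variables with Y_j ~ Beta(b_j/s, w_j/s). -/

import Mathlib

open Finset

/-- Probability that a single system, facing urns whose current compositions are
`(W j white, B j black)` for each state `j`, draws white at states `0, …, r-1`
(moving up one state after each white ball) and then black at state `r`,
i.e. that its 0-block ends at state `r`. Within one block every urn is sampled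
at most once, so no reinforcement occurs inside the block. -/
noncomputable def blockProb (W B : ℕ → ℝ) (r : ℕ) : ℝ :=
  (B r / (W r + B r)) * ∏ j ∈ range r, W j / (W j + B j)

/-- Updated white compositions after observing a system that failed at state `r`:
each urn `j < r` delivered a white ball and receives `s` extra white balls. -/
noncomputable def updW (s : ℝ) (W : ℕ → ℝ) (r : ℕ) : ℕ → ℝ :=
  fun j => if j < r then W j + s else W j

/-- Updated black compositions after observing a system that failed at state `r`:
urn `r` delivered a black ball and receives `s` extra black balls. -/
noncomputable def updB (s : ℝ) (B : ℕ → ℝ) (r : ℕ) : ℕ → ℝ :=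
  fun j => if j = r then B j + s else B j

/-- Joint probability that the successive systems of the reinforced urn process
fail at the states listed in `a` : the first system fails at `a.head`, then the
urns are Pólya-reinforced, the second system fails at the next entry, etc. -/
noncomputable def jointXi (s : ℝ) (W B : ℕ → ℝ) : List ℕ → ℝ
  | [] => 1
  | r :: a => blockProb W B r * jointXi s (updW s W r) (updB s B r) a

open MeasureTheory ProbabilityTheory

/-- The Beta function `B(a,b) = Γ(a)Γ(b)/Γ(a+b)`. -/
noncomputable def betaFn (a b : ℝ) : ℝ :=
  Real.Gamma a * Real.Gamma b / Real.Gamma (a + b)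

/-- The Beta(a,b) probability measure on `[0,1]`, given by the density
`θ^(a-1) (1-θ)^(b-1) / B(a,b)` with respect to Lebesgue measure. -/
noncomputable def betaMeasure (a b : ℝ) : Measure ℝ :=
  (volume.restrict (Set.Ioo (0 : ℝ) 1)).withDensity
    fun θ => ENNReal.ofReal (θ ^ (a - 1) * (1 - θ) ^ (b - 1) / betaFn a b)

/-! ### Auxiliary lemmas -/

lemma betaFn_pos {x y : ℝ} (hx : 0 < x) (hy : 0 < y) : 0 < betaFn x y :=
  div_pos (mul_pos (Real.Gamma_pos_of_pos hx) (Real.Gamma_pos_of_pos hy))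
    (Real.Gamma_pos_of_pos (by linarith))

lemma integral_beta {x y : ℝ} (hx : 0 < x) (hy : 0 < y) :
    ∫ t in Set.Ioo (0:ℝ) 1, t ^ (x-1) * (1-t) ^ (y-1) = betaFn x y := by
  have h1 : Complex.betaIntegral x y
      = ((∫ t in (0:ℝ)..1, t ^ (x-1) * (1-t) ^ (y-1) : ℝ) : ℂ) := by
    rw [Complex.betaIntegral, ← intervalIntegral.integral_ofReal]
    refine intervalIntegral.integral_congr fun t ht => ?_
    rw [Set.uIcc_of_le (by norm_num : (0:ℝ) ≤ 1)] at ht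
    push_cast
    rw [Complex.ofReal_cpow ht.1 (x-1),
      Complex.ofReal_cpow (by linarith [ht.2] : (0:ℝ) ≤ 1 - t) (y-1)]
    push_cast
    ring
  have h2 := Complex.Gamma_mul_Gamma_eq_betaIntegral (s := x) (t := y)
    (by simpa using hx) (by simpa using hy)
  have hg : Complex.Gamma ((x:ℂ) + y) = ((Real.Gamma (x + y) : ℝ) : ℂ) := by
    rw [← Complex.ofReal_add, Complex.Gamma_ofReal]
  have h3 : ((Real.Gamma (x + y) : ℝ) : ℂ) ≠ 0 := by
    exact_mod_cast (Real.Gamma_pos_of_pos (by linarith : (0:ℝ) < x + y)).ne'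
  have h4 : Complex.betaIntegral x y = ((betaFn x y : ℝ) : ℂ) := by
    rw [hg] at h2
    rw [Complex.Gamma_ofReal, Complex.Gamma_ofReal] at h2
    have : ((betaFn x y : ℝ) : ℂ) * ((Real.Gamma (x + y) : ℝ) : ℂ)
        = Complex.betaIntegral x y * ((Real.Gamma (x + y) : ℝ) : ℂ) := by
      rw [mul_comm (Complex.betaIntegral _ _), ← h2, betaFn]
      push_cast
      field_simp
    exact (mul_right_cancel₀ h3 this).symm
  have h5 : (∫ t in (0:ℝ)..1, t ^ (x-1) * (1-t) ^ (y-1) : ℝ) = betaFn x y := by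
    have := h1.symm.trans h4
    exact_mod_cast this
  rw [← h5, intervalIntegral.integral_of_le (by norm_num : (0:ℝ) ≤ 1),
    integral_Ioc_eq_integral_Ioo]

lemma betaFn_succ_left {x y : ℝ} (hx : 0 < x) (hy : 0 < y) :
    betaFn (x+1) y = (x / (x+y)) * betaFn x y := by
  have hxy : x + y ≠ 0 := by positivity
  rw [betaFn, betaFn, Real.Gamma_add_one hx.ne',
    show x + 1 + y = (x+y) + 1 by ring, Real.Gamma_add_one hxy]
  have h1 : Real.Gamma (x+y) ≠ 0 := (Real.Gamma_pos_of_pos (by linarith)).ne'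
  field_simp

lemma betaFn_succ_right {x y : ℝ} (hx : 0 < x) (hy : 0 < y) :
    betaFn x (y+1) = (y / (x+y)) * betaFn x y := by
  have hxy : x + y ≠ 0 := by positivity
  rw [betaFn, betaFn, Real.Gamma_add_one hy.ne',
    show x + (y + 1) = (x+y) + 1 by ring, Real.Gamma_add_one hxy]
  have h1 : Real.Gamma (x+y) ≠ 0 := (Real.Gamma_pos_of_pos (by linarith)).ne'
  field_simp

lemma betaMeasure_moment {α β : ℝ} (hα : 0 < α) (hβ : 0 < β) (k l : ℕ) :
    ∫ θ, θ ^ k * (1-θ) ^ l ∂(_root_.betaMeasure α β)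
      = betaFn (α + k) (β + l) / betaFn α β := by
  have hrp : ∀ q : ℝ, Measurable (fun x : ℝ => x ^ q) := fun q => by measurability
  have hd : Measurable (fun θ : ℝ =>
      (θ ^ (α-1) * (1-θ) ^ (β-1) / betaFn α β).toNNReal) :=
    ((((hrp (α-1)).mul ((hrp (β-1)).comp
      (measurable_const.sub measurable_id))).div_const _).real_toNNReal)
  rw [_root_.betaMeasure,
    show (fun θ : ℝ => ENNReal.ofReal (θ ^ (α-1) * (1-θ) ^ (β-1) / betaFn α β))
      = fun θ => ((θ ^ (α-1) * (1-θ) ^ (β-1) / betaFn α β).toNNReal : ENNReal) from rfl,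
    integral_withDensity_eq_integral_smul hd]
  have hpt : ∀ θ ∈ Set.Ioo (0:ℝ) 1,
      (θ ^ (α-1) * (1-θ) ^ (β-1) / betaFn α β).toNNReal • (θ ^ k * (1-θ) ^ l)
      = θ ^ (α + k - 1) * (1-θ) ^ (β + l - 1) / betaFn α β := by
    intro θ hθ
    have hθ0 : 0 < θ := hθ.1
    have hθ1 : 0 < 1 - θ := by linarith [hθ.2]
    have hnn : 0 ≤ θ ^ (α-1) * (1-θ) ^ (β-1) / betaFn α β :=
      div_nonneg (mul_nonneg (Real.rpow_nonneg hθ0.le _) (Real.rpow_nonneg hθ1.le _))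
        (betaFn_pos hα hβ).le
    rw [NNReal.smul_def, Real.coe_toNNReal _ hnn, smul_eq_mul, div_mul_eq_mul_div]
    congr 1
    have e1 : θ ^ (α-1) * θ ^ k = θ ^ (α + (k:ℝ) - 1) := by
      rw [← Real.rpow_natCast θ k, ← Real.rpow_add hθ0]
      ring_nf
    have e2 : (1-θ) ^ (β-1) * (1-θ) ^ l = (1-θ) ^ (β + (l:ℝ) - 1) := by
      rw [← Real.rpow_natCast (1-θ) l, ← Real.rpow_add hθ1]
      ring_nf
    calc θ ^ (α-1) * (1-θ) ^ (β-1) * (θ ^ k * (1-θ) ^ l)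
        = (θ ^ (α-1) * θ ^ k) * ((1-θ) ^ (β-1) * (1-θ) ^ l) := by ring
      _ = θ ^ (α + (k:ℝ) - 1) * (1-θ) ^ (β + (l:ℝ) - 1) := by rw [e1, e2]
  rw [setIntegral_congr_fun measurableSet_Ioo hpt, integral_div,
    show α + (k:ℝ) - 1 = (α + k) - 1 by ring, show β + (l:ℝ) - 1 = (β + l) - 1 by ring,
    integral_beta (by positivity) (by positivity)]

lemma moment_of_law {Ω : Type*} {mΩ : MeasurableSpace Ω} {P : Measure Ω}
    {X : Ω → ℝ} (hX : Measurable X) {α β : ℝ} (hα : 0 < α) (hβ : 0 < β)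
    (hlaw : Measure.map X P = _root_.betaMeasure α β) (k l : ℕ) :
    ∫ ω, X ω ^ k * (1 - X ω) ^ l ∂P = betaFn (α + k) (β + l) / betaFn α β := by
  have hg : Measurable (fun θ : ℝ => θ ^ k * (1-θ) ^ l) :=
    (measurable_id.pow_const k).mul ((measurable_const.sub measurable_id).pow_const l)
  calc ∫ ω, X ω ^ k * (1 - X ω) ^ l ∂P
      = ∫ θ, θ ^ k * (1-θ) ^ l ∂(Measure.map X P) :=
        (integral_map hX.aemeasurable hg.aestronglyMeasurable).symm
    _ = betaFn (α + k) (β + l) / betaFn α β := by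
        rw [hlaw]; exact betaMeasure_moment hα hβ k l

lemma prod_ite_block {M : Type*} [CommMonoid M] (u v : ℕ → M) {r N : ℕ} (h : r < N) :
    (∏ j ∈ range N, (if j = r then u j else if j < r then v j else 1))
      = u r * ∏ j ∈ range r, v j := by
  have hsub : range (r+1) ⊆ range N := range_subset_range.2 h
  rw [← Finset.prod_subset hsub (by
    intro j hj hj'
    simp only [mem_range] at hj hj'
    have h1 : ¬ j = r := by omega
    have h2 : ¬ j < r := by omega
    simp [h1, h2])]
  rw [Finset.prod_range_succ]
  simp only [if_pos rfl]
  rw [mul_comm]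
  congr 1
  refine Finset.prod_congr rfl fun j hj => ?_
  simp only [mem_range] at hj
  have h1 : ¬ j = r := by omega
  simp [h1, hj]

lemma integrable_prod_of_bdd {Ω : Type*} {mΩ : MeasurableSpace Ω} {P : Measure Ω}
    [IsProbabilityMeasure P] (g : ℕ → Ω → ℝ) (hm : ∀ j, Measurable (g j))
    (hb : ∀ j, ∀ᵐ ω ∂P, |g j ω| ≤ 1) (N : ℕ) :
    Integrable (fun ω => ∏ j ∈ range N, g j ω) P := by
  refine Integrable.mono' (integrable_const 1)
    ((Finset.measurable_prod (range N) fun j _ => hm j).aestronglyMeasurable) ?_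
  filter_upwards [ae_all_iff.2 hb] with ω h
  rw [Real.norm_eq_abs, Finset.abs_prod]
  exact Finset.prod_le_one (fun j _ => abs_nonneg _) (fun j _ => h j)

lemma integral_prod_of_indep {Ω : Type*} {mΩ : MeasurableSpace Ω} {P : Measure Ω}
    [IsProbabilityMeasure P] (g : ℕ → Ω → ℝ) (hm : ∀ j, Measurable (g j))
    (hi : iIndepFun g P)
    (hb : ∀ j, ∀ᵐ ω ∂P, |g j ω| ≤ 1) (N : ℕ) :
    ∫ ω, ∏ j ∈ range N, g j ω ∂P = ∏ j ∈ range N, ∫ ω, g j ω ∂P := by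
  induction N with
  | zero => simp
  | succ N ih =>
    have hint : ∀ j, Integrable (g j) P := by
      intro j
      refine Integrable.mono' (integrable_const 1) (hm j).aestronglyMeasurable ?_
      filter_upwards [hb j] with ω h
      rwa [Real.norm_eq_abs]
    have hip : IndepFun (∏ j ∈ range N, g j) (g N) P :=
      hi.indepFun_prod_range_succ hm N
    have key : ∫ ω, (∏ j ∈ range N, g j) ω * g N ω ∂P
        = (∫ ω, (∏ j ∈ range N, g j) ω ∂P) * ∫ ω, g N ω ∂P :=
      hip.integral_fun_mul_eq_mul_integral
        (Integrable.aestronglyMeasurable <| by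
          have hfe : (∏ j ∈ range N, g j) = fun ω => ∏ j ∈ range N, g j ω :=
            funext fun ω => by simp [Finset.prod_apply]
          rw [hfe]
          exact integrable_prod_of_bdd g hm hb N) (hint N).aestronglyMeasurable
    simp only [Finset.prod_apply] at key
    simp only [Finset.prod_range_succ]
    rw [← ih, ← key]

/-- Proposition 2 (mixture form): the failure states of the reinforced urn
process are conditionally i.i.d. with beta-Stacy random hazards: for every
finite sequence of states `a`,
`P(ξ₁ = a₁,…,ξ_m = a_m) = E[∏_p Y_{a_p} ∏_{j<a_p} (1 - Y_j)]`,
where `(Y_j)` are independent with `Y_j ~ Beta(b_j/s, w_j/s)`. -/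
theorem rup_beta_stacy_mixture (w b : ℕ → ℝ) (s : ℝ)
    (hw : ∀ j, 0 < w j) (hb : ∀ j, 0 < b j) (hs : 0 < s)
    (hrec : Filter.Tendsto (fun n => ∏ j ∈ range (n + 1), w j / (w j + b j))
      Filter.atTop (nhds 0))
    {Ω : Type*} {mΩ : MeasurableSpace Ω} {P : Measure Ω} [IsProbabilityMeasure P]
    (Y : ℕ → Ω → ℝ) (hYmeas : ∀ j, Measurable (Y j))
    (hYindep : iIndepFun Y P)
    (hYlaw : ∀ j, Measure.map (Y j) P = _root_.betaMeasure (b j / s) (w j / s)) :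
    ∀ a : List ℕ,
      jointXi s w b a =
        ∫ ω, (a.map fun r => Y r ω * ∏ j ∈ range r, (1 - Y j ω)).prod ∂P := by
  -- moments
  set mom : ℕ → ℕ → ℕ → ℝ := fun j k l => ∫ ω, Y j ω ^ k * (1 - Y j ω) ^ l ∂P with hmom
  have hα : ∀ j, 0 < b j / s := fun j => div_pos (hb j) hs
  have hβ : ∀ j, 0 < w j / s := fun j => div_pos (hw j) hs
  have hmom_eq : ∀ j k l, mom j k l
      = betaFn (b j / s + k) (w j / s + l) / betaFn (b j / s) (w j / s) :=
    fun j k l => moment_of_law (hYmeas j) (hα j) (hβ j) (hYlaw j) k l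
  have hden : ∀ j (k l : ℕ), (0:ℝ) < w j + b j + s * (k + l) := by
    intro j k l
    have : (0:ℝ) ≤ s * (k + l) := by positivity
    linarith [hw j, hb j]
  -- moment recurrences
  have hmomB : ∀ j (k l : ℕ), mom j (k+1) l
      = ((b j + s * k) / (w j + b j + s * (k + l))) * mom j k l := by
    intro j k l
    have hk : (0:ℝ) ≤ (k:ℝ) := Nat.cast_nonneg k
    have hl : (0:ℝ) ≤ (l:ℝ) := Nat.cast_nonneg l
    have h1 : (0:ℝ) < b j / s + k := by linarith [hα j]
    have h2 : (0:ℝ) < w j / s + l := by linarith [hβ j]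
    rw [hmom_eq, hmom_eq,
      show (b j / s + (↑(k+1) : ℝ)) = (b j / s + k) + 1 by push_cast; ring,
      betaFn_succ_left h1 h2, mul_div_assoc]
    congr 1
    rw [div_eq_div_iff (by linarith) (hden j k l).ne']
    field_simp
    ring
  have hmomW : ∀ j (k l : ℕ), mom j k (l+1)
      = ((w j + s * l) / (w j + b j + s * (k + l))) * mom j k l := by
    intro j k l
    have hk : (0:ℝ) ≤ (k:ℝ) := Nat.cast_nonneg k
    have hl : (0:ℝ) ≤ (l:ℝ) := Nat.cast_nonneg l
    have h1 : (0:ℝ) < b j / s + k := by linarith [hα j]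
    have h2 : (0:ℝ) < w j / s + l := by linarith [hβ j]
    rw [hmom_eq, hmom_eq,
      show (w j / s + (↑(l+1) : ℝ)) = (w j / s + l) + 1 by push_cast; ring,
      betaFn_succ_right h1 h2, mul_div_assoc]
    congr 1
    rw [div_eq_div_iff (by linarith) (hden j k l).ne']
    field_simp
    ring
  -- a.s. range of Y
  have hY01 : ∀ j, ∀ᵐ ω ∂P, Y j ω ∈ Set.Ioo (0:ℝ) 1 := by
    intro j
    have hnull : Measure.map (Y j) P (Set.Ioo (0:ℝ) 1)ᶜ = 0 := by
      rw [hYlaw j, _root_.betaMeasure, withDensity_apply _ measurableSet_Ioo.compl,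
        Measure.restrict_restrict measurableSet_Ioo.compl, Set.compl_inter_self,
        Measure.restrict_empty, lintegral_zero_measure]
    have : ∀ᵐ θ ∂(Measure.map (Y j) P), θ ∈ Set.Ioo (0:ℝ) 1 := mem_ae_iff.2 hnull
    exact (ae_map_iff (hYmeas j).aemeasurable measurableSet_Ioo).1 this
  -- the key generalized identity
  have key : ∀ (a : List ℕ) (c d : ℕ → ℕ) (N : ℕ), (∀ r ∈ a, r < N) →
      (∏ j ∈ range N, mom j (d j) (c j)) *
        jointXi s (fun j => w j + s * c j) (fun j => b j + s * d j) a
      = ∫ ω, (∏ j ∈ range N, Y j ω ^ d j * (1 - Y j ω) ^ c j) *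
          (a.map fun r => Y r ω * ∏ j ∈ range r, (1 - Y j ω)).prod ∂P := by
    intro a
    induction a with
    | nil =>
      intro c d N _
      simp only [jointXi, List.map_nil, List.prod_nil, mul_one]
      have hgm : ∀ j, Measurable (fun ω => Y j ω ^ d j * (1 - Y j ω) ^ c j) :=
        fun j => ((hYmeas j).pow_const (d j)).mul
          ((measurable_const.sub (hYmeas j)).pow_const (c j))
      have hgi : iIndepFun
          (fun j ω => Y j ω ^ d j * (1 - Y j ω) ^ c j) P :=
        hYindep.comp (fun j => fun x : ℝ => x ^ d j * (1-x) ^ c j)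
          (fun j => (measurable_id.pow_const (d j)).mul
            ((measurable_const.sub measurable_id).pow_const (c j)))
      have hgb : ∀ j, ∀ᵐ ω ∂P, |Y j ω ^ d j * (1 - Y j ω) ^ c j| ≤ 1 := by
        intro j
        filter_upwards [hY01 j] with ω hω
        have h0 : (0:ℝ) ≤ Y j ω := hω.1.le
        have h1 : Y j ω ≤ 1 := hω.2.le
        rw [abs_mul, abs_pow, abs_pow, abs_of_nonneg h0, abs_of_nonneg (by linarith)]
        calc Y j ω ^ d j * (1 - Y j ω) ^ c j ≤ 1 * 1 :=
              mul_le_mul (pow_le_one₀ h0 h1) (pow_le_one₀ (by linarith) (by linarith))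
                (pow_nonneg (by linarith) _) (by norm_num)
          _ = 1 := by norm_num
      simp only [hmom]
      exact (integral_prod_of_indep _ hgm hgi hgb N).symm
    | cons r a ih =>
      intro c d N hN
      have hrN : r < N := hN r (List.mem_cons_self)
      set c' : ℕ → ℕ := fun j => if j < r then c j + 1 else c j with hc'
      set d' : ℕ → ℕ := fun j => if j = r then d j + 1 else d j with hd'
      set W : ℕ → ℝ := fun j => w j + s * c j with hW
      set B : ℕ → ℝ := fun j => b j + s * d j with hB
      have hupdW : updW s W r = fun j => w j + s * c' j := by
        funext j
        by_cases hj : j < r <;>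
          simp only [updW, hc', hW, if_pos, if_neg, hj, if_true, if_false] <;>
          push_cast <;> ring
      have hupdB : updB s B r = fun j => b j + s * d' j := by
        funext j
        by_cases hj : j = r <;>
          simp only [updB, hd', hB, if_pos, if_neg, hj, if_true, if_false] <;>
          push_cast <;> ring
      -- Claim A : moment product update
      have claimA : (∏ j ∈ range N, mom j (d' j) (c' j))
          = (∏ j ∈ range N, mom j (d j) (c j)) * blockProb W B r := by
        have hfac : ∀ j ∈ range N, mom j (d' j) (c' j)
            = mom j (d j) (c j) *
              (if j = r then B j / (W j + B j) else if j < r then W j / (W j + B j) else 1) := by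
          intro j _
          by_cases hjr : j = r
          · subst hjr
            simp only [hd', hc', if_pos rfl, if_neg (lt_irrefl j)]
            rw [hmomB j (d j) (c j), mul_comm]
            congr 1
            simp only [hB, hW]
            congr 1
            push_cast; ring
          · by_cases hjl : j < r
            · simp only [hd', hc', if_neg hjr, if_pos hjl]
              rw [hmomW j (d j) (c j), mul_comm]
              congr 1
              simp only [hB, hW]
              congr 1
              push_cast; ring
            · simp [hd', hc', hjr, hjl]
        rw [Finset.prod_congr rfl hfac, Finset.prod_mul_distrib]
        congr 1
        rw [prod_ite_block (fun j => B j / (W j + B j)) (fun j => W j / (W j + B j)) hrN,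
          blockProb]
      -- Claim B : integrand update, pointwise
      have claimB : ∀ ω, (∏ j ∈ range N, Y j ω ^ d' j * (1 - Y j ω) ^ c' j)
          = (∏ j ∈ range N, Y j ω ^ d j * (1 - Y j ω) ^ c j) *
            (Y r ω * ∏ j ∈ range r, (1 - Y j ω)) := by
        intro ω
        have hfac : ∀ j ∈ range N, Y j ω ^ d' j * (1 - Y j ω) ^ c' j
            = (Y j ω ^ d j * (1 - Y j ω) ^ c j) *
              (if j = r then Y j ω else if j < r then (1 - Y j ω) else 1) := by
          intro j _
          by_cases hjr : j = r
          · subst hjr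
            simp only [hd', hc', if_pos rfl, if_neg (lt_irrefl j), eq_self_iff_true, if_true]
            rw [pow_succ]; ring
          · by_cases hjl : j < r
            · simp only [hd', hc', if_neg hjr, if_pos hjl]
              rw [pow_succ]; ring
            · simp [hd', hc', hjr, hjl]
        rw [Finset.prod_congr rfl hfac, Finset.prod_mul_distrib,
          prod_ite_block (fun j => Y j ω) (fun j => (1 - Y j ω)) hrN]
      -- put it together
      have ihs := ih c' d' N (fun x hx => hN x (List.mem_cons_of_mem r hx))
      calc (∏ j ∈ range N, mom j (d j) (c j)) *
            jointXi s (fun j => w j + s * c j) (fun j => b j + s * d j) (r :: a)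
          = (∏ j ∈ range N, mom j (d j) (c j)) * (blockProb W B r *
              jointXi s (fun j => w j + s * c' j) (fun j => b j + s * d' j) a) := by
            rw [jointXi, hupdW, hupdB]
        _ = (∏ j ∈ range N, mom j (d' j) (c' j)) *
              jointXi s (fun j => w j + s * c' j) (fun j => b j + s * d' j) a := by
            rw [claimA]; ring
        _ = ∫ ω, (∏ j ∈ range N, Y j ω ^ d' j * (1 - Y j ω) ^ c' j) *
              (a.map fun r => Y r ω * ∏ j ∈ range r, (1 - Y j ω)).prod ∂P := ihs
        _ = ∫ ω, (∏ j ∈ range N, Y j ω ^ d j * (1 - Y j ω) ^ c j) *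
              ((r :: a).map fun r => Y r ω * ∏ j ∈ range r, (1 - Y j ω)).prod ∂P := by
            congr 1
            funext ω
            rw [claimB ω, List.map_cons, List.prod_cons]
            ring
  -- specialize
  intro a
  have hN : ∀ r ∈ a, r < a.sum + 1 := by
    intro r hr
    have := List.single_le_sum (fun x _ => Nat.zero_le x) r hr
    omega
  have h00 : ∀ j, mom j 0 0 = 1 := by
    intro j
    simp [hmom]
  have := key a (fun _ => 0) (fun _ => 0) (a.sum + 1) hN
  simpa only [Nat.cast_zero, mul_zero, add_zero, pow_zero, mul_one, one_mul, h00,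
    Finset.prod_const_one] using this
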